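/- Let p be a prime and let k be the field with p elements. Let K be a field extension of k and let γ be a k-monomorphism of K. Let E_1, …, E_e be subgroups of the multiplicative group of K and let n_1, …, n_e be pairwise distinct non-negative integers such that γ(x) = x^{p^{n_i}} for every x ∈ E_i and every i. For each i let X_i be a subset of k[E_i] which is a transcendence basis of k(E_i) over k. Then X_1 ∪ … ∪ X_e is a transcendence basis over k of the subfield k(E_1⋯E_e) generated by k and the subgroup generated by E_1, …, E_e. -/

import Mathlib

set_option linter.unusedSectionVars false
set_option maxHeartbeats 1000000
set_option synthInstance.maxHeartbeats 400000

open MvPolynomial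

section MonoLemmas
variable {k : Type*} [CommRing k] {ι : Type*} [Fintype ι] [DecidableEq ι]

/-- pointwise scaling of an exponent vector -/
noncomputable def psiQ (Q : ι → ℕ) (u : ι →₀ ℕ) : ι →₀ ℕ :=
  Finsupp.equivFunOnFinite.symm (fun i => Q i * u i)

lemma psiQ_apply (Q : ι → ℕ) (u : ι →₀ ℕ) (i : ι) : psiQ Q u i = Q i * u i := rfl

lemma psiQ_injective {Q : ι → ℕ} (hQ : ∀ i, 1 ≤ Q i) : Function.Injective (psiQ Q) := by
  intro u v h
  ext i
  have := congrArg (fun f => f i) h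
  simp only [psiQ_apply] at this
  exact Nat.eq_of_mul_eq_mul_left (hQ i) this

lemma bind₁_XQ_monomial (Q : ι → ℕ) (hQ : ∀ i, 1 ≤ Q i) (u : ι →₀ ℕ) (c : k) :
    bind₁ (fun i => (X i : MvPolynomial ι k) ^ Q i) (monomial u c) = monomial (psiQ Q u) c := by
  rw [bind₁_monomial, monomial_eq]
  congr 1
  have hsupp : (psiQ Q u).support = u.support := by
    ext i
    simp only [Finsupp.mem_support_iff, psiQ_apply]
    constructor
    · intro h h'; exact h (by simp [h'])
    · intro h h'
      have := hQ i
      rcases Nat.mul_eq_zero.1 h' with h2 | h2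
      · omega
      · exact h h2
  rw [Finsupp.prod, hsupp]
  refine Finset.prod_congr rfl fun i _ => ?_
  rw [psiQ_apply, pow_mul]

lemma exists_of_coeff_bind₁_XQ_ne_zero {Q : ι → ℕ} (hQ : ∀ i, 1 ≤ Q i)
    (R : MvPolynomial ι k) {v : ι →₀ ℕ}
    (h : coeff v (bind₁ (fun i => (X i : MvPolynomial ι k) ^ Q i) R) ≠ 0) :
    ∃ u, psiQ Q u = v := by
  rw [R.as_sum, map_sum] at h
  rw [coeff_sum] at h
  obtain ⟨u, -, hu⟩ := Finset.exists_ne_zero_of_sum_ne_zero h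
  rw [bind₁_XQ_monomial Q hQ, coeff_monomial] at hu
  split_ifs at hu with he
  · exact ⟨u, he⟩
  · exact absurd rfl hu

lemma coeff_bind₁_XQ_psi {Q : ι → ℕ} (hQ : ∀ i, 1 ≤ Q i)
    (R : MvPolynomial ι k) (v : ι →₀ ℕ) :
    coeff (psiQ Q v) (bind₁ (fun i => (X i : MvPolynomial ι k) ^ Q i) R) = coeff v R := by
  conv_lhs => rw [R.as_sum, map_sum]
  rw [coeff_sum]
  have : ∀ u ∈ R.support,
      coeff (psiQ Q v) (bind₁ (fun i => (X i : MvPolynomial ι k) ^ Q i) (monomial u (coeff u R)))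
      = if u = v then coeff u R else 0 := by
    intro u _
    rw [bind₁_XQ_monomial Q hQ, coeff_monomial]
    congr 1
    simp only [eq_iff_iff]
    exact ⟨fun h => psiQ_injective hQ h, fun h => h ▸ rfl⟩
  rw [Finset.sum_congr rfl this]
  rw [show (∑ x ∈ R.support, if x = v then coeff x R else 0)
      = ∑ x ∈ R.support, if x = v then coeff v R else 0 from
    Finset.sum_congr rfl (by rintro x -; split_ifs with h <;> simp [h]),
    Finset.sum_ite_eq' R.support v (fun _ => coeff v R)]
  by_cases hv : coeff v R = 0
  · simp [hv]
  · simp [Finsupp.mem_support_iff.2 hv, hv]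

/-- exponent vector attached to a "reduced" tuple -/
noncomputable def ebar {Q : ι → ℕ} (e : Π i, Fin (Q i)) : ι →₀ ℕ :=
  Finsupp.equivFunOnFinite.symm (fun i => (e i : ℕ))

lemma ebar_apply {Q : ι → ℕ} (e : Π i, Fin (Q i)) (i : ι) : ebar e i = (e i : ℕ) := rfl

lemma bind₁_XQ_eq_zero_of_sum {Q : ι → ℕ} (hQ : ∀ i, 1 ≤ Q i)
    (R : (Π i, Fin (Q i)) → MvPolynomial ι k)
    (h : ∑ e : Π i, Fin (Q i),
      bind₁ (fun i => (X i : MvPolynomial ι k) ^ Q i) (R e) * monomial (ebar e) 1 = 0)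
    (e₀ : Π i, Fin (Q i)) :
    bind₁ (fun i => (X i : MvPolynomial ι k) ^ Q i) (R e₀) = 0 := by
  set XQ := fun i => (X i : MvPolynomial ι k) ^ Q i with hXQ
  ext v'
  rw [coeff_zero]
  by_cases hex : ∃ u, psiQ Q u = v'
  · obtain ⟨v, rfl⟩ := hex
    have h2 := congrArg (coeff (psiQ Q v + ebar e₀)) h
    rw [coeff_sum, coeff_zero] at h2
    have key : ∀ e ∈ Finset.univ, e ≠ e₀ →
        coeff (psiQ Q v + ebar e₀) (bind₁ XQ (R e) * monomial (ebar e) 1) = 0 := by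
      intro e _ hne
      rw [coeff_mul_monomial']
      split_ifs with hle
      · rw [mul_one]
        by_contra hc
        obtain ⟨w, hw⟩ := exists_of_coeff_bind₁_XQ_ne_zero hQ _ hc
        exfalso
        apply hne
        funext i
        have hle' : (e i : ℕ) ≤ Q i * v i + (e₀ i : ℕ) := by
          have h5 := Finsupp.le_def.mp hle i
          simpa only [psiQ_apply, Finsupp.add_apply, ebar_apply] using h5
        have heq : Q i * w i + (e i : ℕ) = Q i * v i + (e₀ i : ℕ) := by
          have := congrArg (fun f => f i) hw
          simp only [psiQ_apply, Finsupp.tsub_apply, Finsupp.add_apply, ebar_apply] at this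
          omega
        have h3 : (e i : ℕ) % Q i = (e₀ i : ℕ) % Q i := by
          have m1 := Nat.mul_add_mod (Q i) (w i) (e i : ℕ)
          have m2 := Nat.mul_add_mod (Q i) (v i) (e₀ i : ℕ)
          rw [heq] at m1
          omega
        have h4 : (e i : ℕ) = (e₀ i : ℕ) := by
          rwa [Nat.mod_eq_of_lt (e i).isLt, Nat.mod_eq_of_lt (e₀ i).isLt] at h3
        exact Fin.ext h4
      · rfl
    rw [Finset.sum_eq_single_of_mem e₀ (Finset.mem_univ _) key] at h2
    rw [coeff_mul_monomial', if_pos le_add_self, add_tsub_cancel_right, mul_one] at h2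
    exact h2
  · by_contra hc
    exact hex (exists_of_coeff_bind₁_XQ_ne_zero hQ _ hc)

end MonoLemmas

section PTDEG

open IntermediateField

variable {k K : Type*} [Field k] [Field K] [Algebra k K]
variable {ι : Type*} [Fintype ι] [DecidableEq ι]

/-- the monomial family -/
noncomputable def monoFam (x : ι → K) (Q : ι → ℕ) (e : Π i, Fin (Q i)) : K :=
  ∏ i, x i ^ (e i : ℕ)

lemma aeval_ebar_monomial (x : ι → K) (Q : ι → ℕ) (e : Π i, Fin (Q i)) :
    MvPolynomial.aeval x (MvPolynomial.monomial (ebar e) (1 : k)) = monoFam x Q e := by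
  rw [MvPolynomial.aeval_monomial, map_one, one_mul, monoFam]
  exact Finsupp.prod_fintype _ _ fun i => pow_zero (x i)

/-- every monomial in the `x i` lies in the span of the reduced monomials -/
lemma mono_mem_span (x : ι → K) (Q : ι → ℕ) (hQ : ∀ i, 1 ≤ Q i) (a : ι → ℕ) :
    (∏ i, x i ^ a i) ∈ Submodule.span
      (IntermediateField.adjoin k (Set.range fun i => x i ^ Q i))
      (Set.range (monoFam x Q)) := by
  set B : IntermediateField k K := IntermediateField.adjoin k (Set.range fun i => x i ^ Q i)
    with hB
  set W : Submodule (↥B) K := Submodule.span (↥B) (Set.range (monoFam x Q)) with hW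
  have hsplit : (∏ i, x i ^ a i) =
      (∏ i, (x i ^ Q i) ^ (a i / Q i)) *
        monoFam x Q (fun i => ⟨a i % Q i, Nat.mod_lt _ (hQ i)⟩) := by
    rw [monoFam, ← Finset.prod_mul_distrib]
    refine Finset.prod_congr rfl fun i _ => ?_
    rw [← pow_mul, ← pow_add]
    congr 1
    exact (Nat.div_add_mod (a i) (Q i)).symm
  have hxq : ∀ i, x i ^ Q i ∈ B := fun i =>
    IntermediateField.subset_adjoin k (Set.range fun j => x j ^ Q j) (Set.mem_range_self i)
  have hb : (∏ i, (x i ^ Q i) ^ (a i / Q i)) ∈ B :=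
    prod_mem fun i _ => pow_mem (hxq i) _
  rw [hsplit]
  have hmem : monoFam x Q (fun i => ⟨a i % Q i, Nat.mod_lt _ (hQ i)⟩) ∈ W :=
    Submodule.subset_span ⟨_, rfl⟩
  have := W.smul_mem (⟨_, hb⟩ : ↥B) hmem
  rwa [Algebra.smul_def, IntermediateField.algebraMap_apply] at this

theorem relfinrank_adjoin_pow (x : ι → K) (Q : ι → ℕ) (hQ : ∀ i, 1 ≤ Q i)
    (hind : AlgebraicIndependent k x) :
    IntermediateField.relfinrank (IntermediateField.adjoin k (Set.range fun i => x i ^ Q i))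
      (IntermediateField.adjoin k (Set.range x)) = ∏ i, Q i := by
  classical
  set xq : ι → K := fun i => x i ^ Q i with hxq
  set B : IntermediateField k K := IntermediateField.adjoin k (Set.range xq) with hBdef
  set A : IntermediateField k K := IntermediateField.adjoin k (Set.range x) with hAdef
  have hxA : ∀ i, x i ∈ A := fun i =>
    IntermediateField.subset_adjoin k (Set.range x) (Set.mem_range_self i)
  have hBA : B ≤ A := by
    rw [hBdef, IntermediateField.adjoin_le_iff]
    rintro - ⟨i, rfl⟩
    exact pow_mem (hxA i) _
  have haeb : ∀ P : MvPolynomial ι k,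
      MvPolynomial.aeval x (MvPolynomial.bind₁ (fun i => (MvPolynomial.X i : MvPolynomial ι k) ^ Q i) P)
        = MvPolynomial.aeval xq P := by
    intro P
    rw [MvPolynomial.aeval_bind₁]
    simp [hxq]
  -- linear independence of the monomial family over B, inside K
  have hLIK : LinearIndependent (↥B) (monoFam x Q) := by
    rw [Fintype.linearIndependent_iff]
    intro g hg
    have hrep : ∀ e : Π i, Fin (Q i), ∃ rr ss : MvPolynomial ι k,
        MvPolynomial.aeval xq ss ≠ 0 ∧
        (g e : K) * MvPolynomial.aeval xq ss = MvPolynomial.aeval xq rr := by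
      intro e
      obtain ⟨rr, ss, h⟩ := (IntermediateField.mem_adjoin_range_iff k xq ((g e : K))).1 (g e).2
      by_cases hss : MvPolynomial.aeval xq ss = 0
      · refine ⟨0, 1, by simp, by simp [h, hss]⟩
      · refine ⟨rr, ss, hss, by rw [h, div_mul_cancel₀ _ hss]⟩
    choose r s hs hgs using hrep
    set Sden : K := ∏ e : Π i, Fin (Q i), MvPolynomial.aeval xq (s e) with hSden
    have hSden0 : Sden ≠ 0 := Finset.prod_ne_zero_iff.2 fun e _ => hs e
    set Rbig : (Π i, Fin (Q i)) → MvPolynomial ι k :=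
      fun e => r e * ∏ e' ∈ Finset.univ.erase e, s e' with hRbig
    have hterm : ∀ e, MvPolynomial.aeval xq (Rbig e) = (g e : K) * Sden := by
      intro e
      rw [hRbig]
      simp only [map_mul, map_prod]
      rw [← hgs e, hSden, mul_comm ((g e : K)) _, mul_assoc,
        ← Finset.mul_prod_erase _ _ (Finset.mem_univ e)]
      ring
    have key : MvPolynomial.aeval x (∑ e : Π i, Fin (Q i),
        MvPolynomial.bind₁ (fun i => (MvPolynomial.X i : MvPolynomial ι k) ^ Q i) (Rbig e) *
          MvPolynomial.monomial (ebar e) 1) = 0 := by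
      rw [map_sum]
      have : ∀ e : Π i, Fin (Q i), MvPolynomial.aeval x
          (MvPolynomial.bind₁ (fun i => (MvPolynomial.X i : MvPolynomial ι k) ^ Q i) (Rbig e) *
            MvPolynomial.monomial (ebar e) 1) = ((g e : K) * monoFam x Q e) * Sden := by
        intro e
        rw [map_mul, haeb, hterm e, aeval_ebar_monomial]
        ring
      rw [Finset.sum_congr rfl fun e _ => this e, ← Finset.sum_mul]
      have hzero : (∑ e : Π i, Fin (Q i), (g e : K) * monoFam x Q e) = 0 := by
        rw [← hg]
        refine Finset.sum_congr rfl fun e _ => ?_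
        rw [Algebra.smul_def, IntermediateField.algebraMap_apply]
      rw [hzero, zero_mul]
    have hP0 : (∑ e : Π i, Fin (Q i),
        MvPolynomial.bind₁ (fun i => (MvPolynomial.X i : MvPolynomial ι k) ^ Q i) (Rbig e) *
          MvPolynomial.monomial (ebar e) 1) = 0 := by
      apply algebraicIndependent_iff_injective_aeval.mp hind
      rw [key, map_zero]
    intro e
    have hb0 := bind₁_XQ_eq_zero_of_sum hQ Rbig hP0 e
    have : MvPolynomial.aeval xq (Rbig e) = 0 := by rw [← haeb, hb0, map_zero]
    rw [hterm e] at this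
    rcases mul_eq_zero.mp this with h | h
    · exact Subtype.ext h
    · exact absurd h hSden0
  -- spanning
  have hspan : ∀ z : K, z ∈ A →
      z ∈ Submodule.span (↥B) (Set.range (monoFam x Q)) := by
    intro z hz
    set W : Submodule (↥B) K := Submodule.span (↥B) (Set.range (monoFam x Q)) with hW
    have hone : (1 : K) ∈ W := by
      have := mono_mem_span (k := k) x Q hQ (fun _ => 0)
      simpa using this
    have hmul : ∀ a b : K, a ∈ W → b ∈ W → a * b ∈ W := by
      have hWW : W * W ≤ W := by
        rw [hW, Submodule.span_mul_span]
        rw [Submodule.span_le]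
        rintro - ⟨-, ⟨e, rfl⟩, -, ⟨e', rfl⟩, rfl⟩
        have heq : monoFam x Q e * monoFam x Q e' = ∏ i, x i ^ ((e i : ℕ) + (e' i : ℕ)) := by
          rw [monoFam, monoFam, ← Finset.prod_mul_distrib]
          exact Finset.prod_congr rfl fun i _ => (pow_add _ _ _).symm
        show monoFam x Q e * monoFam x Q e' ∈ (Submodule.span (↥B) (Set.range (monoFam x Q)) : Set K)
        rw [heq]
        exact mono_mem_span x Q hQ _
      intro a b ha hb
      exact hWW (Submodule.mul_mem_mul ha hb)
    set S : Subalgebra (↥B) K := W.toSubalgebra hone hmul with hS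
    have hFG : S.toSubmodule.FG := by
      rw [hS, Submodule.toSubalgebra_toSubmodule]
      exact Submodule.fg_span (Set.finite_range _)
    have hSalg : ∀ w : K, w ∈ S → IsAlgebraic (↥B) w := by
      intro w hw
      exact (IsIntegral.of_mem_of_fg S hFG w hw).isAlgebraic
    set T : IntermediateField k K := (S.restrictScalars k).toIntermediateField
      (fun w hw => by
        have hw' : w ∈ S := hw
        exact S.inv_mem_of_algebraic (x := ⟨w, hw'⟩) (hSalg w hw')) with hT
    have hAT : A ≤ T := by
      rw [hAdef, IntermediateField.adjoin_le_iff]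
      rintro - ⟨i, rfl⟩
      show x i ∈ S
      have : (∏ j, x j ^ (if j = i then 1 else 0)) ∈ W := mono_mem_span x Q hQ _
      have h' : x i ∈ W := by simpa using this
      exact h'
    exact hAT hz
  -- build the basis
  rw [IntermediateField.relfinrank_eq_finrank_of_le hBA]
  set AB := IntermediateField.extendScalars hBA with hAB
  have hmemA : ∀ e, monoFam x Q e ∈ AB := by
    intro e
    show monoFam x Q e ∈ A
    exact prod_mem fun i _ => pow_mem (hxA i) _
  set mb : (Π i, Fin (Q i)) → ↥AB := fun e => ⟨monoFam x Q e, hmemA e⟩ with hmb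
  have hcomp : (AB.val.toLinearMap : ↥AB →ₗ[↥B] K) ∘ mb = monoFam x Q := rfl
  have hLI : LinearIndependent (↥B) mb :=
    LinearIndependent.of_comp (AB.val.toLinearMap) (hcomp.symm ▸ hLIK)
  have hSP : ⊤ ≤ Submodule.span (↥B) (Set.range mb) := by
    rintro z -
    have hz : (z : K) ∈ A := z.2
    have h1 : (z : K) ∈ Submodule.span (↥B) (Set.range (monoFam x Q)) := hspan _ hz
    have h2 : Submodule.map (AB.val.toLinearMap) (Submodule.span (↥B) (Set.range mb))
        = Submodule.span (↥B) (Set.range (monoFam x Q)) := by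
      rw [Submodule.map_span, ← Set.range_comp, hcomp]
    rw [← h2] at h1
    obtain ⟨w, hw, hwz⟩ := h1
    have : w = z := Subtype.ext hwz
    rwa [← this]
  let bas : Module.Basis (Π i, Fin (Q i)) (↥B) ↥AB := Module.Basis.mk hLI hSP
  rw [Module.finrank_eq_card_basis bas, Fintype.card_pi]
  simp

end PTDEG

section Helpers

variable {k K : Type*} [Field k] [Field K] [Algebra k K]

/-- transfer algebraicity along a compatible injective map of coefficient rings -/
lemma isAlgebraic_transfer {R₁ R₂ K' : Type*} [CommRing R₁] [CommRing R₂] [CommRing K']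
    [Algebra R₁ K'] [Algebra R₂ K'] (φ : R₁ →+* R₂) (hinj : Function.Injective φ)
    (hcomp : (algebraMap R₂ K').comp φ = algebraMap R₁ K') {a : K'}
    (h : IsAlgebraic R₁ a) : IsAlgebraic R₂ a := by
  obtain ⟨P, hP0, hPa⟩ := h
  refine ⟨P.map φ, fun hc => hP0 (Polynomial.map_injective φ hinj (by simp [hc])), ?_⟩
  rw [Polynomial.aeval_def, Polynomial.eval₂_map, hcomp, ← Polynomial.aeval_def]
  exact hPa

lemma isAlgebraic_mono {M M' : IntermediateField k K} (h : M ≤ M') {a : K}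
    (ha : IsAlgebraic (↥M) a) : IsAlgebraic (↥M') a := by
  refine isAlgebraic_transfer (IntermediateField.inclusion h).toRingHom
    (IntermediateField.inclusion_injective h) ?_ ha
  ext x
  rfl

lemma isAlgebraic_ring_to_field {s : Set K} {M : IntermediateField k K} (hs : s ⊆ M) {a : K}
    (h : IsAlgebraic (Algebra.adjoin k s) a) : IsAlgebraic (↥M) a := by
  have hle : Algebra.adjoin k s ≤ M.toSubalgebra := Algebra.adjoin_le hs
  refine isAlgebraic_transfer (Subalgebra.inclusion hle).toRingHom
    (Subalgebra.inclusion_injective hle) ?_ h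
  ext x
  rfl

/-- a member of a dependent finset whose erase is independent is algebraic over the field
generated by the rest -/
lemma isAlgebraic_of_dep [DecidableEq K] {t : Finset K}
    (hdep : ¬ AlgebraicIndependent k ((↑) : (↑t : Set K) → K)) {c : K} (hc : c ∈ t)
    (herase : AlgebraicIndependent k ((↑) : (↑(t.erase c) : Set K) → K)) :
    IsAlgebraic (↥(IntermediateField.adjoin k (↑(t.erase c) : Set K))) c := by
  by_contra htr
  apply hdep
  have htr' : Transcendental (Algebra.adjoin k ((↑(t.erase c) : Set K))) c := by
    intro halg
    exact htr (isAlgebraic_ring_to_field (IntermediateField.subset_adjoin _ _) halg)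
  have hopt := (herase.option_iff_transcendental c).2 (by rwa [Subtype.range_coe])
  have hc' : c ∉ (↑(t.erase c) : Set K) := by simp
  have h2 : AlgebraicIndependent k
      ((fun o : Option ↥(↑(t.erase c) : Set K) => o.elim c (↑)) ∘
        (Set.subtypeInsertEquivOption hc')) :=
    hopt.comp _ (Equiv.injective _)
  have h3 : ((fun o : Option ↥(↑(t.erase c) : Set K) => o.elim c (↑)) ∘
      (Set.subtypeInsertEquivOption hc')) =
      ((↑) : ↥(insert c (↑(t.erase c) : Set K)) → K) := by
    ext ⟨x, hx⟩
    by_cases h : x = c <;> simp [Set.subtypeInsertEquivOption, h]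
  rw [h3] at h2
  have h4 : (insert c (↑(t.erase c) : Set K)) = (↑t : Set K) := by
    rw [← Finset.coe_insert, Finset.insert_erase hc]
  rw [h4] at h2
  exact h2

end Helpers

section Frob

variable {p : ℕ} [Fact p.Prime] {K : Type*} [Field K] [Algebra (ZMod p) K]

lemma gamma_on_adjoin (γ : K →ₐ[ZMod p] K) (s : Set K) (m : ℕ)
    (h : ∀ a ∈ s, γ a = a ^ p ^ m) :
    ∀ a ∈ Algebra.adjoin (ZMod p) s, γ a = a ^ p ^ m := by
  haveI : CharP K p := charP_of_injective_algebraMap (algebraMap (ZMod p) K).injective p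
  haveI : ExpChar K p := ExpChar.prime Fact.out
  intro a ha
  induction ha using Algebra.adjoin_induction with
  | mem x hx => exact h x hx
  | algebraMap r =>
    rw [AlgHom.commutes, ← map_pow]
    congr 1
    have : r ^ p ^ m = r := by
      have := FiniteField.pow_card_pow (K := ZMod p) m r
      rwa [ZMod.card] at this
    rw [this]
  | add x y hx hy ihx ihy => rw [map_add, ihx, ihy, add_pow_char_pow]
  | mul x y hx hy ihx ihy => rw [map_mul, ihx, ihy, mul_pow]

end Frob

section MainSub

open IntermediateField

variable {k K : Type*} [Field k] [Field K] [Algebra k K]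

lemma relfinrank_map_gamma [DecidableEq K] (γ : K →ₐ[k] K) (q : K → ℕ) (t : Finset K)
    (hq1 : ∀ x ∈ t, 1 ≤ q x) (hγq : ∀ x ∈ t, γ x = x ^ q x)
    (hdep : ¬ AlgebraicIndependent k ((↑) : (↑t : Set K) → K))
    {c : K} (hc : c ∈ t)
    (her : AlgebraicIndependent k ((↑) : (↑(t.erase c) : Set K) → K)) :
    IntermediateField.relfinrank ((IntermediateField.adjoin k (↑t : Set K)).map γ)
      (IntermediateField.adjoin k (↑t : Set K)) = ∏ x ∈ t.erase c, q x := by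
  set F : IntermediateField k K := IntermediateField.adjoin k (↑t : Set K) with hF
  set M : IntermediateField k K := IntermediateField.adjoin k (↑(t.erase c) : Set K) with hM
  have himt : γ '' ↑t = (fun x => x ^ q x) '' (↑t : Set K) :=
    Set.image_congr fun x hx => hγq x hx
  have hime : γ '' ↑(t.erase c) = (fun x => x ^ q x) '' (↑(t.erase c) : Set K) :=
    Set.image_congr fun x hx => hγq x (Finset.mem_of_mem_erase hx)
  have hF1 : F.map γ = IntermediateField.adjoin k ((fun x => x ^ q x) '' (↑t : Set K)) := by
    rw [hF, IntermediateField.adjoin_map, himt]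
  have hM1 : M.map γ = IntermediateField.adjoin k
      ((fun x => x ^ q x) '' (↑(t.erase c) : Set K)) := by
    rw [hM, IntermediateField.adjoin_map, hime]
  have hMF : M ≤ F := by
    rw [hM, IntermediateField.adjoin_le_iff]
    exact fun x hx => IntermediateField.subset_adjoin _ _ (Finset.mem_coe.2
      (Finset.mem_of_mem_erase (Finset.mem_coe.1 hx)))
  have hM1M : M.map γ ≤ M := by
    rw [hM1, IntermediateField.adjoin_le_iff]
    rintro - ⟨x, hx, rfl⟩
    exact pow_mem (IntermediateField.subset_adjoin _ _ hx) _
  have hF1F : F.map γ ≤ F := by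
    rw [hF1, IntermediateField.adjoin_le_iff]
    rintro - ⟨x, hx, rfl⟩
    exact pow_mem (IntermediateField.subset_adjoin _ _ hx) _
  have hM1F1 : M.map γ ≤ F.map γ := by
    rw [hM1, hF1, IntermediateField.adjoin_le_iff]
    rintro - ⟨x, hx, rfl⟩
    exact IntermediateField.subset_adjoin _ _
      ⟨x, Finset.mem_coe.2 (Finset.mem_of_mem_erase (Finset.mem_coe.1 hx)), rfl⟩
  have hPT : IntermediateField.relfinrank (M.map γ) M = ∏ x ∈ t.erase c, q x := by
    have hfam := relfinrank_adjoin_pow (k := k) (ι := ↥(↑(t.erase c) : Set K))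
      (fun i => (i : K)) (fun i => q (i : K))
      (fun i => hq1 _ (Finset.mem_of_mem_erase (Finset.mem_coe.1 i.2))) her
    have hr1 : (Set.range fun i : ↥(↑(t.erase c) : Set K) => (i : K) ^ q (i : K)) =
        (fun x => x ^ q x) '' (↑(t.erase c) : Set K) := by
      ext y
      constructor
      · rintro ⟨i, rfl⟩; exact ⟨i, i.2, rfl⟩
      · rintro ⟨x, hx, rfl⟩; exact ⟨⟨x, hx⟩, rfl⟩
    have hr2 : Set.range ((↑) : ↥(↑(t.erase c) : Set K) → K) = (↑(t.erase c) : Set K) :=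
      Subtype.range_coe
    rw [hr1, hr2] at hfam
    rw [hM1, hM, hfam, Finset.prod_set_coe (f := fun x => q x), Finset.toFinset_coe]
  have htrans : IntermediateField.relfinrank (M.map γ) (F.map γ) =
      IntermediateField.relfinrank M F := IntermediateField.relfinrank_map_map M F γ
  have t1 := IntermediateField.relfinrank_mul_relfinrank hM1M hMF
  have t2 := IntermediateField.relfinrank_mul_relfinrank hM1F1 hF1F
  have hcMF : IntermediateField.relfinrank M F ≠ 0 := by
    rw [IntermediateField.relfinrank_eq_finrank_of_le hMF]
    have hext : IntermediateField.extendScalars hMF =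
        IntermediateField.adjoin (↥M) (↑t : Set K) :=
      IntermediateField.extendScalars_adjoin hMF
    rw [hext]
    haveI : FiniteDimensional (↥M) ↥(IntermediateField.adjoin (↥M) (↑t : Set K)) := by
      apply IntermediateField.finiteDimensional_adjoin
      intro x hx
      by_cases hxc : x = c
      · subst hxc
        exact (isAlgebraic_of_dep hdep hc her).isIntegral
      · have hxM : x ∈ M := by
          rw [hM]
          exact IntermediateField.subset_adjoin _ _
            (Finset.mem_coe.2 (Finset.mem_erase.2 ⟨hxc, Finset.mem_coe.1 hx⟩))
        have := isIntegral_algebraMap (R := ↥M) (A := K) (x := (⟨x, hxM⟩ : ↥M))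
        simpa using this

    exact Module.finrank_pos.ne'
  rw [← hPT]
  rw [htrans] at t2
  have hXY : IntermediateField.relfinrank M F * IntermediateField.relfinrank (F.map γ) F =
      IntermediateField.relfinrank M F * IntermediateField.relfinrank (M.map γ) M := by
    rw [t2, ← t1, mul_comm]
  exact Nat.eq_of_mul_eq_mul_left (Nat.pos_of_ne_zero hcMF) hXY

end MainSub

/-- Let `k = 𝔽_p`, `K/k` a field extension, `γ` a `k`-monomorphism of `K`,
`E 1, …, E e` subgroups of `Kˣ` and `n 1, …, n e` pairwise distinct non-negative integers
such that `γ` acts on `E i` by `p ^ (n i)`-th powering.  If, for each `i`, `X i` is a subset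
of `k[E i]` which is a transcendence basis of `k(E i)` over `k`, then `X 1 ∪ ⋯ ∪ X e` is a
transcendence basis over `k` of the subfield `k(E 1 ⋯ E e)` generated by `k` and the
subgroup generated by the `E i`. -/
theorem union_transcendence_basis_of_frobenius_eigengroups (p : ℕ) [Fact p.Prime]
    (K : Type*) [Field K] [Algebra (ZMod p) K]
    (γ : K →ₐ[ZMod p] K) (hγinj : Function.Injective γ)
    (e : ℕ) (E : Fin e → Subgroup Kˣ) (n : Fin e → ℕ) (hn : Function.Injective n)
    (hγE : ∀ i, ∀ u ∈ E i, γ (u : K) = (u : K) ^ p ^ n i)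
    (X : Fin e → Set K)
    (hXsub : ∀ i, X i ⊆
      (Algebra.adjoin (ZMod p) (Units.val '' ((E i : Set Kˣ))) : Subalgebra (ZMod p) K))
    (hXind : ∀ i, AlgebraicIndependent (ZMod p) ((↑) : (X i) → K))
    (hXalg : ∀ i, ∀ a ∈ IntermediateField.adjoin (ZMod p) (Units.val '' ((E i : Set Kˣ))),
      IsAlgebraic (IntermediateField.adjoin (ZMod p) (X i)) a) :
    AlgebraicIndependent (ZMod p) ((↑) : (⋃ i, X i) → K) ∧
      ∀ a ∈ IntermediateField.adjoin (ZMod p)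
          (Units.val '' (((⨆ i, E i : Subgroup Kˣ) : Subgroup Kˣ) : Set Kˣ)),
        IsAlgebraic (IntermediateField.adjoin (ZMod p) (⋃ i, X i)) a := by
  classical
  set S : Set K := ⋃ i, X i with hS
  -- γ acts by q-th powers on each X i
  have hpow : ∀ i, ∀ x ∈ X i, γ x = x ^ p ^ n i := fun i x hx =>
    gamma_on_adjoin γ _ (n i) (by rintro - ⟨u, hu, rfl⟩; exact hγE i u hu) x (hXsub i hx)
  -- choice of an index for each element of S
  have hchoice : ∀ x, x ∈ S → ∃ i : Fin e, x ∈ X i := fun x hx => Set.mem_iUnion.mp hx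
  choose f hf using hchoice
  set q : K → ℕ := fun x => if h : x ∈ S then p ^ n (f x h) else 1 with hqdef
  have hppos : 1 ≤ p := (Fact.out (p := p.Prime)).one_lt.le
  have hq1 : ∀ x, 1 ≤ q x := by
    intro x
    rw [hqdef]
    dsimp only
    split_ifs with h
    · exact Nat.one_le_pow _ _ (by omega)
    · exact le_refl 1
  have hγq : ∀ x ∈ S, γ x = x ^ q x := by
    intro x hx
    rw [hqdef]
    dsimp only
    rw [dif_pos hx]
    exact hpow (f x hx) x (hf x hx)
  have hqdet : ∀ x (h : x ∈ S), q x = p ^ n (f x h) := by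
    intro x h
    rw [hqdef]
    dsimp only
    rw [dif_pos h]
  -- Part 1 : algebraic independence
  have KEY : ∀ m : ℕ, ∀ t : Finset K, t.card = m → ↑t ⊆ S →
      AlgebraicIndependent (ZMod p) ((↑) : (↑t : Set K) → K) := by
    intro m
    induction m using Nat.strong_induction_on with
    | _ m IH =>
      intro t hcard hts
      by_contra hdep
      have her : ∀ c ∈ t, AlgebraicIndependent (ZMod p) ((↑) : (↑(t.erase c) : Set K) → K) := by
        intro c hc
        exact IH _ (hcard ▸ Finset.card_erase_lt_of_mem hc) _ rfl
          ((Finset.coe_subset.2 (Finset.erase_subset _ _)).trans hts)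
      rcases Finset.eq_empty_or_nonempty t with rfl | ⟨a, ha⟩
      · refine absurd ?_ hdep
        rw [Finset.coe_empty]
        exact algebraicIndependent_empty
      have hrfr : ∀ c ∈ t, IntermediateField.relfinrank
          ((IntermediateField.adjoin (ZMod p) (↑t : Set K)).map γ)
          (IntermediateField.adjoin (ZMod p) (↑t : Set K)) = ∏ x ∈ t.erase c, q x := by
        intro c hc
        exact relfinrank_map_gamma γ q t (fun x hx => hq1 x) (fun x hx => hγq x (hts hx))
          hdep hc (her c hc)
      have hqconst : ∀ b ∈ t, q b = q a := by
        intro b hb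
        have h12 : (∏ x ∈ t.erase a, q x) = ∏ x ∈ t.erase b, q x :=
          (hrfr a ha).symm.trans (hrfr b hb)
        have e1 : q a * ∏ x ∈ t.erase a, q x = ∏ x ∈ t, q x := Finset.mul_prod_erase t q ha
        have e2 : q b * ∏ x ∈ t.erase b, q x = ∏ x ∈ t, q x := Finset.mul_prod_erase t q hb
        have hpos : 0 < ∏ x ∈ t.erase b, q x :=
          Finset.prod_pos fun x _ => Nat.lt_of_lt_of_le Nat.zero_lt_one (hq1 x)
        rw [h12] at e1
        have := e1.trans e2.symm
        exact Nat.eq_of_mul_eq_mul_right hpos this.symm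
      have hsub : (↑t : Set K) ⊆ X (f a (hts ha)) := by
        intro b hb
        have hbS : b ∈ S := hts hb
        have hqeq : p ^ n (f b hbS) = p ^ n (f a (hts ha)) := by
          rw [← hqdet b hbS, ← hqdet a (hts ha)]
          exact hqconst b hb
        have hnn : n (f b hbS) = n (f a (hts ha)) :=
          Nat.pow_right_injective (Fact.out (p := p.Prime)).two_le hqeq
        have : f b hbS = f a (hts ha) := hn hnn
        rw [← this]
        exact hf b hbS
      exact hdep ((hXind _).mono hsub)
  have part1 : AlgebraicIndependent (ZMod p) ((↑) : S → K) := by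
    apply algebraicIndependent_of_finite
    intro t hts hfin
    have := KEY (hfin.toFinset.card) hfin.toFinset rfl (by rwa [Set.Finite.coe_toFinset])
    rwa [Set.Finite.coe_toFinset] at this
  refine ⟨part1, ?_⟩
  -- Part 2 : algebraicity
  set L : IntermediateField (ZMod p) K := IntermediateField.adjoin (ZMod p) S with hL
  have hinv : ∀ w ∈ (integralClosure (↥L) K).restrictScalars (ZMod p), w⁻¹ ∈
      (integralClosure (↥L) K).restrictScalars (ZMod p) := by
    intro w hw
    have hw' : w ∈ integralClosure (↥L) K := hw
    exact (integralClosure (↥L) K).inv_mem_of_algebraic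
      (x := (⟨w, hw'⟩ : integralClosure (↥L) K)) (hw'.isAlgebraic)
  set T2 : IntermediateField (ZMod p) K :=
    ((integralClosure (↥L) K).restrictScalars (ZMod p)).toIntermediateField hinv with hT2
  have hgen : ∀ i : Fin e, ∀ u : Kˣ, u ∈ E i → ((u : K) ∈ T2) := by
    intro i u hu
    have h1 : IsAlgebraic (↥(IntermediateField.adjoin (ZMod p) (X i))) (u : K) :=
      hXalg i _ (IntermediateField.subset_adjoin _ _ ⟨u, hu, rfl⟩)
    have h2 : IsAlgebraic (↥L) (u : K) :=
      isAlgebraic_mono (IntermediateField.adjoin_le_iff.2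
        ((Set.subset_iUnion X i).trans (IntermediateField.subset_adjoin _ _))) h1
    exact h2.isIntegral
  intro a ha
  have haT : a ∈ T2 := by
    have hle : IntermediateField.adjoin (ZMod p)
        (Units.val '' (((⨆ i, E i : Subgroup Kˣ) : Subgroup Kˣ) : Set Kˣ)) ≤ T2 := by
      rw [IntermediateField.adjoin_le_iff]
      rintro - ⟨u, hu, rfl⟩
      refine Subgroup.iSup_induction E (C := fun g : Kˣ => ((g : K) ∈ T2)) hu ?_ ?_ ?_
      · intro i x hx
        exact hgen i x hx
      · simpa using T2.one_mem
      · intro x y hx hy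
        simpa using T2.mul_mem hx hy
    exact hle ha
  have : IsIntegral (↥L) a := haT
  exact this.isAlgebraic
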